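/- Comparison/uniqueness for the graph ∞-Laplacian: under the same connectivity hypotheses, if u, v : X → ℝ satisfy L u(x) = 0 = L v(x) for all x ∈ X \ O, then max_{x∈X} |u(x) − v(x)| = max_{x∈O} |u(x) − v(x)|. In particular, a solution of L u = 0 on X \ O with prescribed values u = g on O is unique if it exists. -/

import Mathlib

open Finset

/-- The graph ∞-Laplacian on a finite vertex set. -/
noncomputable def graphInfLap {V : Type*} [Fintype V] [Nonempty V]
    (w : V → V → ℝ) (u : V → ℝ) (x : V) : ℝ :=
  Finset.univ.sup' Finset.univ_nonempty (fun y => w x y * (u y - u x)) +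
  Finset.univ.inf' Finset.univ_nonempty (fun y => w x y * (u y - u x))

/-- The graph is connected to the boundary set `O`. -/
def graphConnectedTo {V : Type*} (w : V → V → ℝ) (O : Finset V) : Prop :=
  ∀ x : V, x ∉ O → ∃ y ∈ O, Relation.ReflTransGen (fun a b => 0 < w a b) x y

lemma graphInfLap_key {V : Type*} [Fintype V] [Nonempty V]
    (w : V → V → ℝ) (hw : ∀ x y, 0 ≤ w x y)
    (O : Finset V) (hO : O.Nonempty) (hconn : graphConnectedTo w O)
    (u v : V → ℝ)
    (hu : ∀ x : V, x ∉ O → graphInfLap w u x = 0)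
    (hv : ∀ x : V, x ∉ O → graphInfLap w v x = 0) :
    Finset.univ.sup' Finset.univ_nonempty (fun x => u x - v x) ≤
      O.sup' hO (fun x => u x - v x) := by
  set M := Finset.univ.sup' Finset.univ_nonempty (fun x => u x - v x) with hMdef
  have hle : ∀ y : V, u y - v y ≤ M := fun y =>
    Finset.le_sup' (fun x => u x - v x) (Finset.mem_univ y)
  obtain ⟨x₁, -, hx₁⟩ :=
    Finset.exists_mem_eq_sup' (Finset.univ_nonempty (α := V)) (fun x => u x - v x)
  set A : Finset V := Finset.univ.filter (fun x => u x - v x = M) with hAdef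
  have hA : A.Nonempty := ⟨x₁, by simp [hAdef, hx₁.symm]; exact hMdef.symm⟩
  set N := A.sup' hA u with hNdef
  -- the distinguished set
  set B : V → Prop := fun x => u x - v x = M ∧ u x = N with hBdef
  -- propagation
  have prop : ∀ x, B x → x ∉ O → ∀ z, 0 < w x z → B z := by
    intro x hBx hxO z hz
    obtain ⟨hMx, hNx⟩ := hBx
    set Su := Finset.univ.sup' (Finset.univ_nonempty (α := V))
      (fun y => w x y * (u y - u x)) with hSu
    set Iu := Finset.univ.inf' (Finset.univ_nonempty (α := V))
      (fun y => w x y * (u y - u x)) with hIu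
    set Sv := Finset.univ.sup' (Finset.univ_nonempty (α := V))
      (fun y => w x y * (v y - v x)) with hSv
    set Iv := Finset.univ.inf' (Finset.univ_nonempty (α := V))
      (fun y => w x y * (v y - v x)) with hIv
    have hueq : Su + Iu = 0 := hu x hxO
    have hveq : Sv + Iv = 0 := hv x hxO
    have ineq : ∀ y : V, w x y * (u y - u x) ≤ w x y * (v y - v x) := by
      intro y
      have := hle y
      have h1 : u y - u x ≤ v y - v x := by
        have : u y - v y ≤ u x - v x := by rw [hMx]; exact hle y
        linarith
      exact mul_le_mul_of_nonneg_left h1 (hw x y)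
    have hSuSv : Su ≤ Sv := by
      apply Finset.sup'_le
      intro y _
      exact le_trans (ineq y) (Finset.le_sup' (fun y => w x y * (v y - v x)) (Finset.mem_univ y))
    have hIuIv : Iu ≤ Iv := by
      apply Finset.le_inf'
      intro y _
      exact le_trans (Finset.inf'_le (fun y => w x y * (u y - u x)) (Finset.mem_univ y)) (ineq y)
    have hSeq : Su = Sv := by linarith
    have hIeq : Iu = Iv := by linarith
    have hS0 : 0 ≤ Su := by
      have : w x x * (u x - u x) ≤ Su :=
        Finset.le_sup' (fun y => w x y * (u y - u x)) (Finset.mem_univ x)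
      simpa using this
    -- show Su = 0
    have hSu0 : Su = 0 := by
      rcases lt_or_eq_of_le hS0 with hpos | h0
      · exfalso
        obtain ⟨y, -, hy⟩ :=
          Finset.exists_mem_eq_sup' (Finset.univ_nonempty (α := V))
            (fun y => w x y * (u y - u x))
        rw [← hSu] at hy
        have hwxy : 0 < w x y := by
          rcases (hw x y).lt_or_eq with h | h
          · exact h
          · exfalso; rw [← h] at hy; simp at hy; linarith
        have huyx : 0 < u y - u x := by
          by_contra hcon
          push_neg at hcon
          nlinarith
        have hvle : w x y * (v y - v x) ≤ Sv :=
          Finset.le_sup' (fun y => w x y * (v y - v x)) (Finset.mem_univ y)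
        have h1 : v y - v x ≤ u y - u x := by
          rw [← hSeq] at hvle
          rw [hy] at hvle
          exact le_of_mul_le_mul_left hvle hwxy
        have hyA : y ∈ A := by
          simp only [hAdef, Finset.mem_filter, Finset.mem_univ, true_and]
          have : u x - v x ≤ u y - v y := by linarith
          have := hle y
          linarith [hMx]
        have : u y ≤ N := Finset.le_sup' u hyA
        linarith [hNx, huyx]
      · exact h0.symm
    have hIu0 : Iu = 0 := by linarith
    have hSv0 : Sv = 0 := by linarith
    have hIv0 : Iv = 0 := by linarith
    have huz : u z = u x := by
      have h1 : w x z * (u z - u x) ≤ Su :=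
        Finset.le_sup' (fun y => w x y * (u y - u x)) (Finset.mem_univ z)
      have h2 : Iu ≤ w x z * (u z - u x) :=
        Finset.inf'_le (fun y => w x y * (u y - u x)) (Finset.mem_univ z)
      rw [hSu0] at h1; rw [hIu0] at h2
      nlinarith
    have hvz : v z = v x := by
      have h1 : w x z * (v z - v x) ≤ Sv :=
        Finset.le_sup' (fun y => w x y * (v y - v x)) (Finset.mem_univ z)
      have h2 : Iv ≤ w x z * (v z - v x) :=
        Finset.inf'_le (fun y => w x y * (v y - v x)) (Finset.mem_univ z)
      rw [hSv0] at h1; rw [hIv0] at h2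
      nlinarith
    constructor
    · rw [huz, hvz]; exact hMx
    · rw [huz]; exact hNx
  -- path propagation
  have path : ∀ x y : V, Relation.ReflTransGen (fun a b => 0 < w a b) x y → B x →
      (∃ z ∈ O, B z) ∨ B y := by
    intro x y h hx
    induction h with
    | refl => exact Or.inr hx
    | @tail b c hr hs ih =>
      rcases ih with h1 | h1
      · exact Or.inl h1
      · by_cases hbO : b ∈ O
        · exact Or.inl ⟨b, hbO, h1⟩
        · exact Or.inr (prop b h1 hbO c hs)
  -- pick a point of B
  obtain ⟨x₀, hx₀A, hx₀⟩ := Finset.exists_mem_eq_sup' hA u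
  have hx₀M : u x₀ - v x₀ = M := by
    simp only [hAdef, Finset.mem_filter] at hx₀A
    exact hx₀A.2
  have hBx₀ : B x₀ := ⟨hx₀M, hx₀.symm⟩
  have final : ∃ z ∈ O, B z := by
    by_cases hx₀O : x₀ ∈ O
    · exact ⟨x₀, hx₀O, hBx₀⟩
    · obtain ⟨y, hyO, hpath⟩ := hconn x₀ hx₀O
      rcases path x₀ y hpath hBx₀ with h | h
      · exact h
      · exact ⟨y, hyO, h⟩
  obtain ⟨z, hzO, hMz, -⟩ := final
  calc M = u z - v z := hMz.symm
    _ ≤ O.sup' hO (fun x => u x - v x) := Finset.le_sup' (fun x => u x - v x) hzO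

/-- Comparison/uniqueness for the graph ∞-Laplacian: two graph ∞-harmonic functions differ
at most as much as they differ on the boundary set; in particular solutions with prescribed
boundary values are unique. -/
theorem graphInfLap_comparison {V : Type*} [Fintype V] [Nonempty V]
    (w : V → V → ℝ) (hw : ∀ x y, 0 ≤ w x y) (hsym : ∀ x y, w x y = w y x)
    (O : Finset V) (hO : O.Nonempty) (hconn : graphConnectedTo w O)
    (u v : V → ℝ)
    (hu : ∀ x : V, x ∉ O → graphInfLap w u x = 0)
    (hv : ∀ x : V, x ∉ O → graphInfLap w v x = 0) :
    (Finset.univ.sup' Finset.univ_nonempty (fun x => |u x - v x|) =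
      O.sup' hO (fun x => |u x - v x|)) ∧
    ((∀ x ∈ O, u x = v x) → u = v) := by
  have hv' : ∀ x : V, x ∉ O → graphInfLap w v x = 0 := hv
  have huv := graphInfLap_key w hw O hO hconn u v hu hv
  have hvLu : ∀ x : V, x ∉ O → graphInfLap w v x = 0 := hv
  have hvu := graphInfLap_key w hw O hO hconn v u hv hu
  have hOabs1 : O.sup' hO (fun x => u x - v x) ≤ O.sup' hO (fun x => |u x - v x|) := by
    apply Finset.sup'_le
    intro x hx
    exact le_trans (le_abs_self _) (Finset.le_sup' (fun x => |u x - v x|) hx)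
  have hOabs2 : O.sup' hO (fun x => v x - u x) ≤ O.sup' hO (fun x => |u x - v x|) := by
    apply Finset.sup'_le
    intro x hx
    have : v x - u x ≤ |u x - v x| := by
      rw [abs_sub_comm]; exact le_abs_self _
    exact le_trans this (Finset.le_sup' (fun x => |u x - v x|) hx)
  have hmain : Finset.univ.sup' Finset.univ_nonempty (fun x => |u x - v x|) =
      O.sup' hO (fun x => |u x - v x|) := by
    apply le_antisymm
    · apply Finset.sup'_le
      intro x _
      rw [abs_sub_le_iff]
      constructor
      · exact le_trans (le_trans (Finset.le_sup' (fun x => u x - v x) (Finset.mem_univ x))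
          (le_trans huv hOabs1)) le_rfl
      · exact le_trans (le_trans (Finset.le_sup' (fun x => v x - u x) (Finset.mem_univ x))
          (le_trans hvu hOabs2)) le_rfl
    · apply Finset.sup'_le
      intro x hx
      exact Finset.le_sup' (fun x => |u x - v x|) (Finset.mem_univ x)
  refine ⟨hmain, ?_⟩
  intro hbd
  have h0 : O.sup' hO (fun x => |u x - v x|) ≤ 0 := by
    apply Finset.sup'_le
    intro x hx
    rw [hbd x hx]
    simp
  funext x
  have h1 : |u x - v x| ≤ 0 := by
    calc |u x - v x| ≤ Finset.univ.sup' Finset.univ_nonempty (fun x => |u x - v x|) :=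
          Finset.le_sup' (fun x => |u x - v x|) (Finset.mem_univ x)
      _ = O.sup' hO (fun x => |u x - v x|) := hmain
      _ ≤ 0 := h0
  have : u x - v x = 0 := abs_eq_zero.mp (le_antisymm h1 (abs_nonneg _))
  linarith
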